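/- arXiv:2301.04645 — 4 statements merged into one kernel-verified Lean document; each statement's English description precedes it below -/
import Mathlib

section
/- The Korányi norm ‖(z,t)‖_ℍ = (|z|⁴ + 16t²)^{1/4} on the Heisenberg group satisfies the triangle-type inequality ‖p ∗ q‖_ℍ ≤ ‖p‖_ℍ + ‖q‖_ℍ for all p, q ∈ ℍ, so that d_ℍ(p,q) = ‖q⁻¹ ∗ p‖_ℍ is a metric. -/
open MeasureTheory Real ENNReal NNReal

/-- The Heisenberg group as a set: ℝ³ ≅ ℂ × ℝ. -/
abbrev H : Type := ℝ × ℝ × ℝ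

/-- Heisenberg group law. -/
noncomputable def hmul (p q : H) : H :=
  (p.1 + q.1, p.2.1 + q.2.1,
    p.2.2 + q.2.2 + (p.1 * q.2.1 - p.2.1 * q.1) / 2)

/-- Heisenberg inverse. -/
def hinv (p : H) : H := (-p.1, -p.2.1, -p.2.2)

/-- Korányi norm. -/
noncomputable def knorm (p : H) : ℝ :=
  ((p.1 ^ 2 + p.2.1 ^ 2) ^ 2 + 16 * p.2.2 ^ 2) ^ ((1 : ℝ) / 4)

/-- Korányi distance. -/
noncomputable def dH (p q : H) : ℝ := knorm (hmul (hinv q) p)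

/-- Heisenberg dilation. -/
noncomputable def dil (l : ℝ) (p : H) : H := (l * p.1, l * p.2.1, l ^ 2 * p.2.2)

/-- Horizontal subgroup 𝕍_θ. -/
noncomputable def V (θ : ℝ) : Set H :=
  {p | ∃ l : ℝ, p = (l * Real.cos θ, l * Real.sin θ, 0)}

/-- Vertical plane 𝕍_θ^⊥. -/
noncomputable def Vperp (θ : ℝ) : Set H :=
  {p | ∃ m s : ℝ, p = (-m * Real.sin θ, m * Real.cos θ, s)}

/-- Dual line ℓ*(x,y,t) = (0,x,t−xy/2) + ℝ·(1,−y,y²/2). -/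
noncomputable def lstar (p : H) : Set (ℝ × ℝ × ℝ) :=
  {q | ∃ l : ℝ, q = (l, p.1 - l * p.2.1, p.2.2 - p.1 * p.2.1 / 2 + l * p.2.1 ^ 2 / 2)}

/-- Horizontal line ℓ(a,b,c). -/
noncomputable def lline (p : ℝ × ℝ × ℝ) : Set H :=
  {q | ∃ s : ℝ, q = (p.1 * s + p.2.1, s, p.2.2 + p.2.1 * s / 2)}

/-- Euclidean norm on ℝ³. -/
noncomputable def enorm3 (p : ℝ × ℝ × ℝ) : ℝ :=
  Real.sqrt (p.1 ^ 2 + p.2.1 ^ 2 + p.2.2 ^ 2)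

/-- Explicit formula for the vertical projection P_{𝕍_θ^⊥}. -/
noncomputable def Pproj (θ : ℝ) (p : H) : H :=
  (p.1 - (p.1 * Real.cos θ + p.2.1 * Real.sin θ) * Real.cos θ,
   p.2.1 - (p.1 * Real.cos θ + p.2.1 * Real.sin θ) * Real.sin θ,
   p.2.2 - ((p.1 * Real.cos θ + p.2.1 * Real.sin θ) * Real.sin θ *
        (p.1 - (p.1 * Real.cos θ + p.2.1 * Real.sin θ) * Real.cos θ) -
      (p.1 * Real.cos θ + p.2.1 * Real.sin θ) * Real.cos θ *
        (p.2.1 - (p.1 * Real.cos θ + p.2.1 * Real.sin θ) * Real.sin θ)) / 2)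

/-- 2-dimensional Lebesgue (Hausdorff) measure ℋ²_E on the plane 𝕍_θ^⊥,
realised as a measure on ℝ³ via the parametrization (μ,s) ↦ (−μ sinθ, μ cosθ, s). -/
noncomputable def planeMeasure (θ : ℝ) : Measure H :=
  Measure.map (fun ms : ℝ × ℝ => ((-ms.1 * Real.sin θ, ms.1 * Real.cos θ, ms.2) : H))
    (volume : Measure (ℝ × ℝ))

/-- Horizontal X-ray transform of `f` along the horizontal line `w ∗ 𝕍_θ`,
with respect to 1-dimensional Korányi Hausdorff measure (which on a horizontal
line is the pushforward of Lebesgue measure under arclength parametrization). -/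
noncomputable def XH (f : H → ℝ) (w : H) (θ : ℝ) : ℝ≥0∞ :=
  ∫⁻ l : ℝ, ENNReal.ofReal (f (hmul w (l * Real.cos θ, l * Real.sin θ, 0)))

/-- ‖P_{𝕍_θ^⊥#} μ‖_{L^q(ℋ²_E)}^q, computed via the Radon–Nikodym density of the
pushforward with respect to ℋ²_E on 𝕍_θ^⊥. -/
noncomputable def projNormPow (θ : ℝ) (μ : Measure H) (q : ℝ) : ℝ≥0∞ :=
  ∫⁻ w, ((μ.map (Pproj θ)).rnDeriv (planeMeasure θ) w) ^ q ∂(planeMeasure θ)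

/-- Korányi ball. -/
noncomputable def kball (x : H) (r : ℝ) : Set H := {p | dH p x < r}

/-- Frostman constant c_α(ν). -/
noncomputable def frostman (α : ℝ) (ν : Measure H) : ℝ≥0∞ :=
  ⨆ (x : H) (r : ℝ) (_ : 0 < r), ν (kball x r) / ENNReal.ofReal (r ^ α)

/-- Truncated Frostman constant c_{α,δ}(ν). -/
noncomputable def frostmanTrunc (α δ : ℝ) (ν : Measure H) : ℝ≥0∞ :=
  ⨆ (x : H) (r : ℝ) (_ : δ < r), ν (kball x r) / ENNReal.ofReal (r ^ α)

lemma knorm_nonneg (p : H) : 0 ≤ knorm p :=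
  Real.rpow_nonneg (by positivity) _

lemma knorm_sq (p : H) :
    knorm p ^ 2 = Real.sqrt ((p.1 ^ 2 + p.2.1 ^ 2) ^ 2 + 16 * p.2.2 ^ 2) := by
  unfold knorm
  rw [← Real.rpow_natCast _ 2, ← Real.rpow_mul (by positivity), Real.sqrt_eq_rpow]
  norm_num

lemma knorm_sq_eq_abs (p : H) :
    knorm p ^ 2 =
      ‖((p.1 ^ 2 + p.2.1 ^ 2 : ℝ) : ℂ) + (4 * p.2.2 : ℝ) * Complex.I‖ := by
  rw [knorm_sq, Complex.norm_def, Complex.normSq_apply]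
  simp [pow_two, Complex.add_re, Complex.add_im, Complex.mul_re, Complex.mul_im]
  ring_nf

lemma sqrt_le_knorm (p : H) : Real.sqrt (p.1 ^ 2 + p.2.1 ^ 2) ≤ knorm p := by
  rw [← pow_le_pow_iff_left₀ (Real.sqrt_nonneg _) (knorm_nonneg p) (two_ne_zero),
    knorm_sq, Real.sq_sqrt (by positivity)]
  calc p.1 ^ 2 + p.2.1 ^ 2 = Real.sqrt ((p.1 ^ 2 + p.2.1 ^ 2) ^ 2) :=
        (Real.sqrt_sq (by positivity)).symm
    _ ≤ _ := Real.sqrt_le_sqrt (by nlinarith)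

lemma knorm_triangle (p q : H) : knorm (hmul p q) ≤ knorm p + knorm q := by
  rw [← pow_le_pow_iff_left₀ (knorm_nonneg _) (add_nonneg (knorm_nonneg p) (knorm_nonneg q)) (two_ne_zero)]
  have key : (((hmul p q).1 ^ 2 + (hmul p q).2.1 ^ 2 : ℝ) : ℂ)
        + (4 * (hmul p q).2.2 : ℝ) * Complex.I =
      (((p.1 ^ 2 + p.2.1 ^ 2 : ℝ) : ℂ) + (4 * p.2.2 : ℝ) * Complex.I)
      + (((q.1 ^ 2 + q.2.1 ^ 2 : ℝ) : ℂ) + (4 * q.2.2 : ℝ) * Complex.I)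
      + 2 * (starRingEnd ℂ (p.1 + p.2.1 * Complex.I)) * (q.1 + q.2.1 * Complex.I) := by
    apply Complex.ext <;> simp [hmul, pow_two, Complex.add_re, Complex.add_im, Complex.mul_re, Complex.mul_im] <;> ring
  have habs : ‖p.1 + p.2.1 * Complex.I‖ = Real.sqrt (p.1 ^ 2 + p.2.1 ^ 2) := by
    rw [Complex.norm_def, Complex.normSq_apply]
    simp [pow_two, Complex.add_re, Complex.add_im, Complex.mul_re, Complex.mul_im]
  have habs' : ‖q.1 + q.2.1 * Complex.I‖ = Real.sqrt (q.1 ^ 2 + q.2.1 ^ 2) := by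
    rw [Complex.norm_def, Complex.normSq_apply]
    simp [pow_two, Complex.add_re, Complex.add_im, Complex.mul_re, Complex.mul_im]
  calc knorm (hmul p q) ^ 2
      = ‖(((p.1 ^ 2 + p.2.1 ^ 2 : ℝ) : ℂ) + (4 * p.2.2 : ℝ) * Complex.I)
        + (((q.1 ^ 2 + q.2.1 ^ 2 : ℝ) : ℂ) + (4 * q.2.2 : ℝ) * Complex.I)
        + 2 * (starRingEnd ℂ (p.1 + p.2.1 * Complex.I)) * (q.1 + q.2.1 * Complex.I)‖ := by
        rw [knorm_sq_eq_abs, key]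
    _ ≤ ‖((p.1 ^ 2 + p.2.1 ^ 2 : ℝ) : ℂ) + (4 * p.2.2 : ℝ) * Complex.I‖
        + ‖((q.1 ^ 2 + q.2.1 ^ 2 : ℝ) : ℂ) + (4 * q.2.2 : ℝ) * Complex.I‖
        + ‖2 * (starRingEnd ℂ (p.1 + p.2.1 * Complex.I))
            * (q.1 + q.2.1 * Complex.I)‖ := by
        refine le_trans (norm_add_le _ _) ?_
        gcongr
        exact norm_add_le _ _
    _ = knorm p ^ 2 + knorm q ^ 2
        + 2 * (Real.sqrt (p.1 ^ 2 + p.2.1 ^ 2) * Real.sqrt (q.1 ^ 2 + q.2.1 ^ 2)) := by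
        rw [← knorm_sq_eq_abs, ← knorm_sq_eq_abs, norm_mul, norm_mul, Complex.norm_conj,
          habs, habs']
        simp
        ring
    _ ≤ knorm p ^ 2 + knorm q ^ 2 + 2 * (knorm p * knorm q) := by
        have hm := mul_le_mul (sqrt_le_knorm p) (sqrt_le_knorm q) (Real.sqrt_nonneg _)
          (knorm_nonneg _)
        linarith
    _ = (knorm p + knorm q) ^ 2 := by ring

lemma knorm_eq_zero_iff (p : H) : knorm p = 0 ↔ p = (0, 0, 0) := by
  unfold knorm
  rw [Real.rpow_eq_zero (by positivity) (by norm_num)]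
  constructor
  · intro h
    have ht2 : p.2.2 ^ 2 = 0 := by nlinarith [sq_nonneg (p.1 ^ 2 + p.2.1 ^ 2)]
    have ha2 : (p.1 ^ 2 + p.2.1 ^ 2) ^ 2 = 0 := by nlinarith
    have ha : p.1 ^ 2 + p.2.1 ^ 2 = 0 := by
      exact pow_eq_zero_iff two_ne_zero |>.mp ha2
    have h1 : p.1 ^ 2 = 0 := by nlinarith [sq_nonneg p.1, sq_nonneg p.2.1]
    have h2 : p.2.1 ^ 2 = 0 := by nlinarith [sq_nonneg p.1, sq_nonneg p.2.1]
    exact Prod.ext (pow_eq_zero_iff two_ne_zero |>.mp h1)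
      (Prod.ext (pow_eq_zero_iff two_ne_zero |>.mp h2)
        (pow_eq_zero_iff two_ne_zero |>.mp ht2))
  · rintro rfl; norm_num

/-- the Korányi norm satisfies the triangle-type inequality
‖p∗q‖ ≤ ‖p‖ + ‖q‖, so that d_ℍ(p,q) = ‖q⁻¹∗p‖ is a metric. -/
theorem koranyi_triangle_inequality :
    (∀ p q : H, knorm (hmul p q) ≤ knorm p + knorm q) ∧
    (∀ p q : H, dH p q = 0 ↔ p = q) ∧
    (∀ p q : H, dH p q = dH q p) ∧
    (∀ p q r : H, dH p r ≤ dH p q + dH q r) := by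
  refine ⟨knorm_triangle, ?_, ?_, ?_⟩
  · intro p q
    rw [dH, knorm_eq_zero_iff]
    constructor
    · intro h
      have h1 : p.1 - q.1 = 0 := by
        have := congrArg Prod.fst h; simpa [hmul, hinv, sub_eq_add_neg, add_comm] using this
      have h2 : p.2.1 - q.2.1 = 0 := by
        have := congrArg (fun x : H => x.2.1) h
        simpa [hmul, hinv, sub_eq_add_neg, add_comm] using this
      have h3 := congrArg (fun x : H => x.2.2) h
      simp only [hmul, hinv] at h3
      refine Prod.ext (by linarith) (Prod.ext (by linarith) ?_)
      have hp1 : p.1 = q.1 := by linarith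
      have hp2 : p.2.1 = q.2.1 := by linarith
      rw [hp1, hp2] at h3
      nlinarith [h3]
    · rintro rfl
      simp only [hmul, hinv]
      refine Prod.ext (by ring) (Prod.ext (by ring) (by ring))
  · intro p q
    unfold dH knorm hmul hinv
    ring_nf
  · intro p q r
    have key : hmul (hinv r) p = hmul (hmul (hinv r) q) (hmul (hinv q) p) := by
      unfold hmul hinv
      refine Prod.ext (by ring) (Prod.ext (by ring) (by ring))
    calc dH p r = knorm (hmul (hmul (hinv r) q) (hmul (hinv q) p)) := by rw [dH, key]
      _ ≤ knorm (hmul (hinv r) q) + knorm (hmul (hinv q) p) := knorm_triangle _ _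
      _ = dH p q + dH q r := by rw [dH, dH]; ring
end

section
/- Point-line duality: for p = (a,b,c) ∈ ℝ³ and p* = (x,y,t) ∈ ℍ, the point p lies on the line ℓ*(x,y,t) = (0,x,t−xy/2) + ℝ·(1,−y,y²/2) if and only if the point p* lies on the horizontal line ℓ(a,b,c) = {(as+b, s, c+bs/2) : s ∈ ℝ}. -/
open MeasureTheory Real ENNReal NNReal

/-- point-line duality: p ∈ ℓ*(p*) if and only if p* ∈ ℓ(p). -/
theorem point_line_duality (p : ℝ × ℝ × ℝ) (pstar : H) :
    p ∈ lstar pstar ↔ pstar ∈ lline p := by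
  simp only [lstar, lline, Set.mem_setOf_eq]
  constructor
  · rintro ⟨l, h⟩
    rw [Prod.ext_iff, Prod.ext_iff] at h
    obtain ⟨h1, h2, h3⟩ := h
    refine ⟨pstar.2.1, ?_⟩
    rw [Prod.ext_iff, Prod.ext_iff]
    refine ⟨?_, rfl, ?_⟩ <;> simp [h1, h2, h3] <;> ring
  · rintro ⟨s, h⟩
    rw [Prod.ext_iff, Prod.ext_iff] at h
    obtain ⟨h1, h2, h3⟩ := h
    refine ⟨p.1, ?_⟩
    rw [Prod.ext_iff, Prod.ext_iff]
    simp only at h1 h2 h3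
    subst h2
    refine ⟨rfl, ?_, ?_⟩ <;> rw [h1, h3] <;> ring
end

section
/- There is a constant C > 0 such that for every (x,y,t) in the unit Korányi ball of ℍ and every δ > 0, the Euclidean δ-neighbourhood of the line ℓ*(x,y,t) in ℝ³ is contained in the union ⋃{ℓ*(x',y',t') : (x',y',t') ∈ B_E((x,y,t), Cδ)}, where B_E denotes the Euclidean ball. -/
open MeasureTheory Real ENNReal NNReal

set_option maxHeartbeats 2000000 in
/-- ∃ C > 0 such that for (x,y,t) in the Korányi unit ball and
δ > 0, the Euclidean δ-neighbourhood of ℓ*(x,y,t) is contained in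
ℓ*(B_E((x,y,t), Cδ)). -/
theorem dual_line_neighbourhood_in_dual_ball :
    ∃ C > (0 : ℝ), ∀ p : H, knorm p < 1 → ∀ δ > (0 : ℝ),
      {q : ℝ × ℝ × ℝ | ∃ r ∈ lstar p, enorm3 (q - r) < δ} ⊆
        {q : ℝ × ℝ × ℝ | ∃ p' : H, enorm3 (p' - p) < C * δ ∧ q ∈ lstar p'} := by
  refine ⟨3, by norm_num, ?_⟩
  rintro ⟨x, y, t⟩ hp δ hδ q ⟨r, ⟨lam, hr⟩, hq⟩
  -- bound y² ≤ 1
  have hbase : (x ^ 2 + y ^ 2) ^ 2 + 16 * t ^ 2 < 1 := by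
    by_contra h
    push_neg at h
    have : (1 : ℝ) ≤ ((x ^ 2 + y ^ 2) ^ 2 + 16 * t ^ 2) ^ ((1 : ℝ) / 4) :=
      Real.one_le_rpow h (by norm_num)
    simp only [knorm] at hp
    linarith
  have hy2 : y ^ 2 ≤ 1 := by
    have h1 : (y ^ 2) ^ 2 ≤ (x ^ 2 + y ^ 2) ^ 2 := by nlinarith [sq_nonneg x, sq_nonneg y]
    have h2 : (y ^ 2) ^ 2 < 1 := by nlinarith [sq_nonneg t]
    nlinarith [sq_nonneg y]
  -- error components
  set e1 := q.1 - r.1 with he1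
  set e2 := q.2.1 - r.2.1 with he2
  set e3 := q.2.2 - r.2.2 with he3
  have hqe : enorm3 (q - r) = Real.sqrt (e1 ^ 2 + e2 ^ 2 + e3 ^ 2) := by
    simp [enorm3, he1, he2, he3, Prod.sub_def]
  rw [hqe] at hq
  have hsum : e1 ^ 2 + e2 ^ 2 + e3 ^ 2 < δ ^ 2 := by
    have h0 : (0:ℝ) ≤ e1 ^ 2 + e2 ^ 2 + e3 ^ 2 := by positivity
    nlinarith [Real.sq_sqrt h0, Real.sqrt_nonneg (e1 ^ 2 + e2 ^ 2 + e3 ^ 2)]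
  -- define p'
  set x' := q.2.1 + q.1 * y with hx'
  set t' := q.2.2 + x' * y / 2 - q.1 * y ^ 2 / 2 with ht'
  refine ⟨(x', y, t'), ?_, ⟨q.1, ?_⟩⟩
  · -- norm bound
    have hr1 : r.1 = lam := by rw [hr]
    have hr2 : r.2.1 = x - lam * y := by rw [hr]
    have hr3 : r.2.2 = t - x * y / 2 + lam * y ^ 2 / 2 := by rw [hr]
    have hq1 : q.1 = lam + e1 := by rw [he1, hr1]; ring
    have hq2 : q.2.1 = x - lam * y + e2 := by rw [he2, hr2]; ring
    have hq3 : q.2.2 = t - x * y / 2 + lam * y ^ 2 / 2 + e3 := by rw [he3, hr3]; ring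
    have hxx : x' - x = e2 + e1 * y := by rw [hx', hq1, hq2]; ring
    have htt : t' - t = e3 + e2 * y / 2 := by
      rw [ht', hx', hq1, hq2, hq3]; ring
    have : enorm3 ((x', y, t') - (x, y, t)) =
        Real.sqrt ((e2 + e1 * y) ^ 2 + 0 ^ 2 + (e3 + e2 * y / 2) ^ 2) := by
      simp only [enorm3, Prod.sub_def]
      rw [show x' - x = e2 + e1 * y from hxx, show t' - t = e3 + e2 * y / 2 from htt]
      norm_num
    rw [this]
    have h9 : (e2 + e1 * y) ^ 2 + 0 ^ 2 + (e3 + e2 * y / 2) ^ 2 < (3 * δ) ^ 2 := by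
      have hA : e1 ^ 2 * y ^ 2 ≤ e1 ^ 2 := by nlinarith [sq_nonneg e1]
      have hB : e2 ^ 2 * y ^ 2 ≤ e2 ^ 2 := by nlinarith [sq_nonneg e2]
      have hC : (e2 + e1 * y) ^ 2 ≤ 2 * e2 ^ 2 + 2 * e1 ^ 2 := by
        nlinarith [sq_nonneg (e2 - e1 * y)]
      have hD : (e3 + e2 * y / 2) ^ 2 ≤ 2 * e3 ^ 2 + e2 ^ 2 / 2 := by
        nlinarith [sq_nonneg (e3 - e2 * y / 2)]
      have hδ2 : (0:ℝ) < δ ^ 2 := by positivity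
      have hE : (3 * δ) ^ 2 = 9 * δ ^ 2 := by ring
      clear_value e1 e2 e3
      rw [hE]
      norm_num
      nlinarith [sq_nonneg e1, sq_nonneg e3]
    calc Real.sqrt ((e2 + e1 * y) ^ 2 + 0 ^ 2 + (e3 + e2 * y / 2) ^ 2)
        < 3 * δ := (Real.sqrt_lt' (by positivity)).mpr h9
      _ = 3 * δ := rfl
  · -- q ∈ lstar p'
    have : q = (q.1, x' - q.1 * y, t' - x' * y / 2 + q.1 * y ^ 2 / 2) := by
      refine Prod.ext rfl (Prod.ext ?_ ?_) <;> simp [hx', ht'] <;> ring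
    exact this
end

section
/- There is a constant C > 0 such that for every (x,y,t) in the Korányi unit ball and every δ > 0, the intersection of the Euclidean ball B_E(0,100) ⊂ ℝ³ with ⋃{ℓ*(x',y',t') : |(x',y',t') − (x,y,t)| < δ} is contained in the Euclidean Cδ-neighbourhood of ℓ*(x,y,t). -/
open MeasureTheory Real ENNReal NNReal

lemma sqsum_lt_of_enorm3_lt {v : ℝ × ℝ × ℝ} {c : ℝ} (hc : 0 < c) (h : enorm3 v < c) :
    v.1 ^ 2 + v.2.1 ^ 2 + v.2.2 ^ 2 < c ^ 2 :=
  (Real.sqrt_lt' hc).1 h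

lemma enorm3_lt_of_sqsum_lt {v : ℝ × ℝ × ℝ} {c : ℝ} (hc : 0 < c)
    (h : v.1 ^ 2 + v.2.1 ^ 2 + v.2.2 ^ 2 < c ^ 2) : enorm3 v < c :=
  (Real.sqrt_lt' hc).2 h

lemma abs_sub_le3 (a b : ℝ) : |a - b| ≤ |a| + |b| := by
  calc |a - b| = |a + -b| := by ring_nf
    _ ≤ |a| + |-b| := abs_add_le _ _
    _ = |a| + |b| := by rw [abs_neg]

lemma abs_le_of_sq_le_sq'' {a b : ℝ} (hb : 0 ≤ b) (h : a ^ 2 ≤ b ^ 2) : |a| ≤ b := by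
  nlinarith [abs_nonneg a, sq_abs a]

lemma aux_knorm {p : H} (h : knorm p < 1) : |p.1| ≤ 1 ∧ |p.2.1| ≤ 1 ∧ |p.2.2| ≤ 1 := by
  have hk4 : (p.1 ^ 2 + p.2.1 ^ 2) ^ 2 + 16 * p.2.2 ^ 2 < 1 := by
    by_contra hcon
    push_neg at hcon
    have h2 : (1:ℝ) ≤ ((p.1 ^ 2 + p.2.1 ^ 2) ^ 2 + 16 * p.2.2 ^ 2) ^ ((1:ℝ)/4) := by
      calc (1:ℝ) = (1:ℝ) ^ ((1:ℝ)/4) := by simp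
        _ ≤ ((p.1 ^ 2 + p.2.1 ^ 2) ^ 2 + 16 * p.2.2 ^ 2) ^ ((1:ℝ)/4) :=
            Real.rpow_le_rpow (by norm_num) hcon (by norm_num)
    rw [knorm] at h
    linarith
  have hxy : p.1 ^ 2 + p.2.1 ^ 2 ≤ 1 := by
    nlinarith [sq_nonneg (p.1 ^ 2 + p.2.1 ^ 2 - 1), sq_nonneg p.2.2]
  refine ⟨?_, ?_, ?_⟩
  · exact abs_le_of_sq_le_sq'' (by norm_num) (by nlinarith [sq_nonneg p.2.1])
  · exact abs_le_of_sq_le_sq'' (by norm_num) (by nlinarith [sq_nonneg p.1])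
  · exact abs_le_of_sq_le_sq'' (by norm_num)
      (by nlinarith [sq_nonneg (p.1 ^ 2 + p.2.1 ^ 2)])

lemma aux_big {q1 q2 q3 x y t δ : ℝ} (hq : q1 ^ 2 + q2 ^ 2 + q3 ^ 2 < 100 ^ 2)
    (hx : |x| ≤ 1) (hy : |y| ≤ 1) (ht : |t| ≤ 1) (h1 : 1 ≤ δ) :
    q1 ^ 2 + (q2 - x) ^ 2 + (q3 - (t - x * y / 2)) ^ 2 < (300 * δ) ^ 2 := by
  have hδ2 : (1:ℝ) ≤ δ ^ 2 := by nlinarith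
  have hq1a : |q1| ≤ 100 := abs_le_of_sq_le_sq'' (by norm_num)
    (by nlinarith [sq_nonneg q2, sq_nonneg q3])
  have hq2a : |q2| ≤ 100 := abs_le_of_sq_le_sq'' (by norm_num)
    (by nlinarith [sq_nonneg q1, sq_nonneg q3])
  have hq3a : |q3| ≤ 100 := abs_le_of_sq_le_sq'' (by norm_num)
    (by nlinarith [sq_nonneg q1, sq_nonneg q2])
  have hca : |t - x * y / 2| ≤ 2 := by
    have hxy : |x * y / 2| ≤ 1 := by
      rw [abs_div, abs_mul, abs_two]
      have : |x| * |y| ≤ 1 * 1 := mul_le_mul hx hy (abs_nonneg y) (by norm_num)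
      linarith
    calc |t - x * y / 2| ≤ |t| + |x * y / 2| := abs_sub_le3 _ _
      _ ≤ 2 := by linarith
  have h2a : |q2 - x| ≤ 101 := by
    calc |q2 - x| ≤ |q2| + |x| := abs_sub_le3 _ _
      _ ≤ 101 := by linarith
  have h3a : |q3 - (t - x * y / 2)| ≤ 102 := by
    calc |q3 - (t - x * y / 2)| ≤ |q3| + |t - x * y / 2| := abs_sub_le3 _ _
      _ ≤ 102 := by linarith
  have s1 : q1 ^ 2 ≤ 100 ^ 2 := by nlinarith [sq_abs q1, abs_nonneg q1]
  have s2 : (q2 - x) ^ 2 ≤ 101 ^ 2 := by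
    nlinarith [sq_abs (q2 - x), abs_nonneg (q2 - x)]
  have s3 : (q3 - (t - x * y / 2)) ^ 2 ≤ 102 ^ 2 := by
    nlinarith [sq_abs (q3 - (t - x * y / 2)), abs_nonneg (q3 - (t - x * y / 2))]
  nlinarith [hδ2]

lemma aux_small {dx dy dt l x y δ : ℝ} (hδ : 0 < δ) (h1 : δ < 1)
    (hdx : |dx| ≤ δ) (hdy : |dy| ≤ δ) (hdt : |dt| ≤ δ)
    (hl : |l| ≤ 100) (hx : |x| ≤ 1) (hy : |y| ≤ 1) :
    (dx - l * dy) ^ 2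
      + (dt - (x * dy + y * dx + dx * dy) / 2 + l * (2 * y * dy + dy ^ 2) / 2) ^ 2
      < (300 * δ) ^ 2 := by
  have hδδ : δ ^ 2 ≤ δ := by nlinarith
  have ha : |dx - l * dy| ≤ 101 * δ := by
    calc |dx - l * dy| ≤ |dx| + |l * dy| := abs_sub_le3 _ _
      _ ≤ δ + 100 * δ := by
          rw [abs_mul]
          have : |l| * |dy| ≤ 100 * δ := mul_le_mul hl hdy (abs_nonneg dy) (by norm_num)
          linarith
      _ = 101 * δ := by ring
  have h1' : |x * dy| ≤ δ := by
    rw [abs_mul]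
    calc |x| * |dy| ≤ 1 * δ := mul_le_mul hx hdy (abs_nonneg dy) (by norm_num)
      _ = δ := by ring
  have h2' : |y * dx| ≤ δ := by
    rw [abs_mul]
    calc |y| * |dx| ≤ 1 * δ := mul_le_mul hy hdx (abs_nonneg dx) (by norm_num)
      _ = δ := by ring
  have h3' : |dx * dy| ≤ δ := by
    rw [abs_mul]
    calc |dx| * |dy| ≤ δ * δ := mul_le_mul hdx hdy (abs_nonneg dy) hδ.le
      _ = δ ^ 2 := by ring
      _ ≤ δ := hδδ
  have h4' : |2 * y * dy + dy ^ 2| ≤ 3 * δ := by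
    have e1 : |2 * y * dy| ≤ 2 * δ := by
      have : |2 * y * dy| = 2 * (|y| * |dy|) := by
        rw [abs_mul, abs_mul, abs_two]; ring
      rw [this]
      have : |y| * |dy| ≤ 1 * δ := mul_le_mul hy hdy (abs_nonneg dy) (by norm_num)
      linarith
    have e2 : |dy ^ 2| ≤ δ := by
      rw [abs_pow]
      calc |dy| ^ 2 ≤ δ ^ 2 := by nlinarith [abs_nonneg dy]
        _ ≤ δ := hδδ
    calc |2 * y * dy + dy ^ 2| ≤ |2 * y * dy| + |dy ^ 2| := abs_add_le _ _
      _ ≤ 3 * δ := by linarith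
  have h5' : |l * (2 * y * dy + dy ^ 2)| ≤ 300 * δ := by
    rw [abs_mul]
    calc |l| * |2 * y * dy + dy ^ 2| ≤ 100 * (3 * δ) :=
        mul_le_mul hl h4' (abs_nonneg _) (by norm_num)
      _ = 300 * δ := by ring
  have hmid : |(x * dy + y * dx + dx * dy) / 2| ≤ 3 * δ / 2 := by
    rw [abs_div, abs_two]
    have : |x * dy + y * dx + dx * dy| ≤ 3 * δ := by
      calc |x * dy + y * dx + dx * dy| ≤ |x * dy + y * dx| + |dx * dy| := abs_add_le _ _
        _ ≤ (|x * dy| + |y * dx|) + |dx * dy| := by gcongr; exact abs_add_le _ _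
        _ ≤ 3 * δ := by linarith
    linarith
  have hb : |dt - (x * dy + y * dx + dx * dy) / 2 + l * (2 * y * dy + dy ^ 2) / 2|
      ≤ 154 * δ := by
    calc |dt - (x * dy + y * dx + dx * dy) / 2 + l * (2 * y * dy + dy ^ 2) / 2|
        ≤ |dt - (x * dy + y * dx + dx * dy) / 2| + |l * (2 * y * dy + dy ^ 2) / 2| :=
          abs_add_le _ _
      _ ≤ (|dt| + |(x * dy + y * dx + dx * dy) / 2|) + |l * (2 * y * dy + dy ^ 2)| / 2 := by
          rw [abs_div, abs_two]
          gcongr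
          exact abs_sub_le3 _ _
      _ ≤ (δ + 3 * δ / 2) + 300 * δ / 2 := by linarith
      _ ≤ 154 * δ := by linarith
  have ha2 : (dx - l * dy) ^ 2 ≤ (101 * δ) ^ 2 := by
    nlinarith [sq_abs (dx - l * dy), abs_nonneg (dx - l * dy)]
  have hb2 : (dt - (x * dy + y * dx + dx * dy) / 2 + l * (2 * y * dy + dy ^ 2) / 2) ^ 2
      ≤ (154 * δ) ^ 2 := by
    nlinarith [sq_abs (dt - (x * dy + y * dx + dx * dy) / 2 + l * (2 * y * dy + dy ^ 2) / 2),
      abs_nonneg (dt - (x * dy + y * dx + dx * dy) / 2 + l * (2 * y * dy + dy ^ 2) / 2)]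
  nlinarith [sq_nonneg δ, hδ]

set_option maxHeartbeats 1000000 in
/-- ∃ C > 0 such that for (x,y,t) in the Korányi unit ball and
δ > 0, B_E(0,100) ∩ ℓ*(B_E((x,y,t),δ)) is contained in the Euclidean
Cδ-neighbourhood of ℓ*(x,y,t). -/
theorem dual_ball_in_dual_line_neighbourhood :
    ∃ C > (0 : ℝ), ∀ p : H, knorm p < 1 → ∀ δ > (0 : ℝ),
      {q : ℝ × ℝ × ℝ | enorm3 q < 100 ∧ ∃ p' : H, enorm3 (p' - p) < δ ∧ q ∈ lstar p'} ⊆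
        {q : ℝ × ℝ × ℝ | ∃ r ∈ lstar p, enorm3 (q - r) < C * δ} := by
  refine ⟨300, by norm_num, ?_⟩
  intro p hkp δ hδ q hq
  obtain ⟨hq100, p', hpd, l, hql⟩ := hq
  obtain ⟨hxa, hya, hta⟩ := aux_knorm hkp
  have hpd2 : (p'.1 - p.1) ^ 2 + (p'.2.1 - p.2.1) ^ 2 + (p'.2.2 - p.2.2) ^ 2 < δ ^ 2 := by
    have h := sqsum_lt_of_enorm3_lt hδ hpd
    simpa using h
  have hq2 : q.1 ^ 2 + q.2.1 ^ 2 + q.2.2 ^ 2 < 100 ^ 2 :=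
    sqsum_lt_of_enorm3_lt (by norm_num) hq100
  rw [hql] at hq2
  simp only [] at hq2
  have hdxa : |p'.1 - p.1| ≤ δ := abs_le_of_sq_le_sq'' hδ.le
    (by nlinarith [sq_nonneg (p'.2.1 - p.2.1), sq_nonneg (p'.2.2 - p.2.2)])
  have hdya : |p'.2.1 - p.2.1| ≤ δ := abs_le_of_sq_le_sq'' hδ.le
    (by nlinarith [sq_nonneg (p'.1 - p.1), sq_nonneg (p'.2.2 - p.2.2)])
  have hdta : |p'.2.2 - p.2.2| ≤ δ := abs_le_of_sq_le_sq'' hδ.le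
    (by nlinarith [sq_nonneg (p'.1 - p.1), sq_nonneg (p'.2.1 - p.2.1)])
  have hla : |l| ≤ 100 := abs_le_of_sq_le_sq'' (by norm_num)
    (by nlinarith [sq_nonneg (p'.1 - l * p'.2.1),
      sq_nonneg (p'.2.2 - p'.1 * p'.2.1 / 2 + l * p'.2.1 ^ 2 / 2)])
  rcases le_or_gt 1 δ with h1 | h1
  · -- large δ : use the point with parameter 0
    refine ⟨(0, p.1, p.2.2 - p.1 * p.2.1 / 2), ⟨0, by norm_num⟩, ?_⟩
    refine enorm3_lt_of_sqsum_lt (by positivity) ?_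
    rw [hql]
    have h := aux_big (x := p.1) (y := p.2.1) (t := p.2.2) hq2 hxa hya hta h1
    simp only [Prod.mk_sub_mk]
    nlinarith [h]
  · -- small δ : use the point with the same parameter l
    refine ⟨(l, p.1 - l * p.2.1, p.2.2 - p.1 * p.2.1 / 2 + l * p.2.1 ^ 2 / 2),
      ⟨l, rfl⟩, ?_⟩
    refine enorm3_lt_of_sqsum_lt (by positivity) ?_
    rw [hql]
    have h := aux_small (dx := p'.1 - p.1) (dy := p'.2.1 - p.2.1) (dt := p'.2.2 - p.2.2)
      (l := l) (x := p.1) (y := p.2.1) hδ h1 hdxa hdya hdta hla hxa hya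
    simp only [Prod.mk_sub_mk]
    nlinarith [h]
end
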